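/- Let (T,Σ,μ) be a complete finite measure space and E a separable Banach space with dual E*. If {f_n} is an integrably bounded sequence of Gelfand integrable functions from T to E* such that f_n → f in the σ(G¹,L^∞⊗E)-topology (i.e., for every x ∈ E and every φ ∈ L^∞(μ), ∫ φ(t)⟨x, f_n(t)⟩ dμ → ∫ φ(t)⟨x, f(t)⟩ dμ), then f(t) belongs to the weak*-closed convex hull of w*-Ls{f_n(t)} for a.e. t ∈ T. -/

import Mathlib

open MeasureTheory Filter Topology Set

noncomputable section

/-- The (strong) upper limit `Ls {F n}` of a sequence of sets in a topological space:
all points that are limits of some subsequence of points `x_{n_i} ∈ F_{n_i}`. -/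
def Ls {E : Type*} [TopologicalSpace E] (F : ℕ → Set E) : Set E :=
  {x | ∃ φ : ℕ → ℕ, StrictMono φ ∧ ∃ u : ℕ → E,
    (∀ i, u i ∈ F (φ i)) ∧ Tendsto u atTop (𝓝 x)}

/-- A function with values in the dual of `E` is Gelfand integrable: it is weakly*
scalarly integrable and over each measurable set it has a Gelfand integral. -/
def GelfandIntegrable {T : Type*} [MeasurableSpace T] {E : Type*} [NormedAddCommGroup E]
    [NormedSpace ℝ E] (μ : Measure T) (f : T → (E →L[ℝ] ℝ)) : Prop :=
  (∀ x : E, Integrable (fun t => f t x) μ) ∧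
  ∀ A : Set T, MeasurableSet A → ∃ g : E →L[ℝ] ℝ, ∀ x : E, g x = ∫ t in A, f t x ∂μ

open scoped Classical in
/-- The Gelfand (weak*) integral of a function with values in the dual of `E`. -/
noncomputable def gelfandIntegral {T : Type*} [MeasurableSpace T] {E : Type*}
    [NormedAddCommGroup E] [NormedSpace ℝ E] (μ : Measure T)
    (f : T → (E →L[ℝ] ℝ)) : E →L[ℝ] ℝ :=
  if h : ∃ g : E →L[ℝ] ℝ, ∀ x : E, g x = ∫ t, f t x ∂μ then h.choose else 0

/-- The weak* upper limit `w*-Ls {F n}` of a sequence of sets in the dual of `E`. -/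
def wstarLs {E : Type*} [NormedAddCommGroup E] [NormedSpace ℝ E]
    (F : ℕ → Set (E →L[ℝ] ℝ)) : Set (E →L[ℝ] ℝ) :=
  {g | ∃ φ : ℕ → ℕ, StrictMono φ ∧ ∃ u : ℕ → (E →L[ℝ] ℝ), (∀ i, u i ∈ F (φ i)) ∧
    ∀ x : E, Tendsto (fun i => u i x) atTop (𝓝 (g x))}

/-- The Gelfand integral of a multifunction: the set of Gelfand integrals of its
Gelfand integrable a.e.-selectors. -/
def gelfandSelIntegral {T : Type*} [MeasurableSpace T] {E : Type*} [NormedAddCommGroup E]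
    [NormedSpace ℝ E] (μ : Measure T) (G : T → Set (E →L[ℝ] ℝ)) : Set (E →L[ℝ] ℝ) :=
  {y | ∃ g : T → (E →L[ℝ] ℝ), GelfandIntegrable μ g ∧ (∀ᵐ t ∂μ, g t ∈ G t) ∧
    y = gelfandIntegral μ g}

/-- The weak*-closure of a set in the dual of `E`. -/
def wstarClosure {E : Type*} [NormedAddCommGroup E] [NormedSpace ℝ E]
    (s : Set (E →L[ℝ] ℝ)) : Set (E →L[ℝ] ℝ) :=
  @closure (WeakDual ℝ E) _ s

lemma seq_alaoglu {E : Type*} [NormedAddCommGroup E] [NormedSpace ℝ E]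
    [TopologicalSpace.SeparableSpace E] {R : ℝ} (h : ℕ → E →L[ℝ] ℝ)
    (hb : ∀ i, ‖h i‖ ≤ R) :
    ∃ ρ : ℕ → ℕ, StrictMono ρ ∧ ∃ L : E →L[ℝ] ℝ,
      ∀ x : E, Tendsto (fun i => h (ρ i) x) atTop (𝓝 (L x)) := by
  have hR : 0 ≤ R := le_trans (norm_nonneg _) (hb 0)
  have : Nonempty E := ⟨0⟩
  set D := TopologicalSpace.denseSeq E with hDdef
  have hD : DenseRange D := TopologicalSpace.denseRange_denseSeq E
  set K : Set (ℕ → ℝ) := Set.pi Set.univ (fun k => Icc (-(R * ‖D k‖)) (R * ‖D k‖)) with hKdef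
  have hK : IsSeqCompact K := (isCompact_univ_pi (fun k => isCompact_Icc)).isSeqCompact
  have hmem : ∀ i, (fun k => h i (D k)) ∈ K := by
    intro i k _
    have h1 : ‖h i (D k)‖ ≤ R * ‖D k‖ :=
      le_trans ((h i).le_opNorm (D k))
        (mul_le_mul_of_nonneg_right (hb i) (norm_nonneg _))
    rw [Real.norm_eq_abs, abs_le] at h1
    exact ⟨by linarith [h1.1], h1.2⟩
  obtain ⟨y, hyK, ρ, hρmono, hρt⟩ := hK hmem
  have hptk : ∀ k, Tendsto (fun i => h (ρ i) (D k)) atTop (𝓝 (y k)) := by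
    intro k
    have := tendsto_pi_nhds.1 hρt k
    simpa [Function.comp] using this
  have hcau : ∀ x : E, ∃ l, Tendsto (fun i => h (ρ i) x) atTop (𝓝 l) := by
    intro x
    apply cauchySeq_tendsto_of_complete
    rw [Metric.cauchySeq_iff]
    intro ε hε
    obtain ⟨k, hk⟩ := hD.exists_dist_lt x (show (0:ℝ) < ε/(4*(R+1)) by positivity)
    have hc : CauchySeq (fun i => h (ρ i) (D k)) := (hptk k).cauchySeq
    rw [Metric.cauchySeq_iff] at hc
    obtain ⟨N, hN⟩ := hc (ε/2) (by positivity)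
    refine ⟨N, fun m hm n hn => ?_⟩
    have hbound : ∀ i, dist (h (ρ i) x) (h (ρ i) (D k)) ≤ ε/4 := by
      intro i
      rw [dist_eq_norm, ← map_sub]
      calc ‖h (ρ i) (x - D k)‖ ≤ ‖h (ρ i)‖ * ‖x - D k‖ := (h (ρ i)).le_opNorm _
        _ ≤ R * ‖x - D k‖ := mul_le_mul_of_nonneg_right (hb _) (norm_nonneg _)
        _ ≤ (R+1) * (ε/(4*(R+1))) := by
            rw [← dist_eq_norm] at *
            have := hk.le
            nlinarith [dist_nonneg (x := x) (y := D k)]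
        _ = ε/4 := by field_simp
    calc dist (h (ρ m) x) (h (ρ n) x)
        ≤ dist (h (ρ m) x) (h (ρ m) (D k)) + dist (h (ρ m) (D k)) (h (ρ n) (D k))
            + dist (h (ρ n) (D k)) (h (ρ n) x) := dist_triangle4 _ _ _ _
      _ < ε/4 + ε/2 + ε/4 := by
          have := hN m hm n hn
          have h1 := hbound m
          have h2 := hbound n
          rw [dist_comm ((h (ρ n)) (D k)) ((h (ρ n)) x)]
          linarith
      _ = ε := by ring
  choose L0 hL0 using hcau
  have hadd : ∀ x z : E, L0 (x + z) = L0 x + L0 z := by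
    intro x z
    refine tendsto_nhds_unique (hL0 (x+z)) ?_
    have := (hL0 x).add (hL0 z)
    refine this.congr fun i => ?_
    rw [← map_add]
  have hsmul : ∀ (c : ℝ) (x : E), L0 (c • x) = c • L0 x := by
    intro c x
    refine tendsto_nhds_unique (hL0 (c • x)) ?_
    have := (hL0 x).const_mul c
    refine this.congr fun i => ?_
    rw [ContinuousLinearMap.map_smul, smul_eq_mul]
  have hbd : ∀ x : E, ‖L0 x‖ ≤ R * ‖x‖ := by
    intro x
    refine le_of_tendsto (hL0 x).norm (Eventually.of_forall fun i => ?_)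
    exact le_trans ((h (ρ i)).le_opNorm x)
      (mul_le_mul_of_nonneg_right (hb _) (norm_nonneg _))
  refine ⟨ρ, hρmono, LinearMap.mkContinuous
    { toFun := L0, map_add' := hadd, map_smul' := hsmul } R hbd, fun x => hL0 x⟩


lemma weakdual_eval {E : Type*} [NormedAddCommGroup E] [NormedSpace ℝ E]
    (F : WeakDual ℝ E →L[ℝ] ℝ) : ∃ x : E, ∀ h : WeakDual ℝ E, F h = h x := by
  have : Nonempty E := ⟨0⟩
  have hp := (topDualPairing ℝ E).weakBilin_withSeminorms
  set q : Seminorm ℝ (WeakDual ℝ E) := LinearMap.toSeminorm (F : WeakDual ℝ E →ₗ[ℝ] ℝ) with hq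
  have hqc : Continuous q := by
    have : ⇑q = fun h => ‖F h‖ := rfl
    rw [this]
    exact continuous_norm.comp F.continuous
  obtain ⟨s, C, hC, hle⟩ := Seminorm.bound_of_continuous hp q hqc
  have key : ∀ h : WeakDual ℝ E, (∀ y ∈ s, (h : E →L[ℝ] ℝ) y = 0) → F h = 0 := by
    intro h h0
    have h1 : q h ≤ (C • s.sup (topDualPairing ℝ E).toSeminormFamily) h := hle h
    have h2 : (s.sup (topDualPairing ℝ E).toSeminormFamily) h ≤ 0 := by
      refine Seminorm.finset_sup_apply_le le_rfl fun y hy => ?_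
      have : (topDualPairing ℝ E).toSeminormFamily y h = ‖(h : E →L[ℝ] ℝ) y‖ := rfl
      rw [this, h0 y hy, norm_zero]
    have h3 : q h ≤ 0 := by
      refine le_trans h1 ?_
      have : (C • s.sup (topDualPairing ℝ E).toSeminormFamily) h
          = (C : ℝ) * (s.sup (topDualPairing ℝ E).toSeminormFamily) h := rfl
      rw [this]
      nlinarith [apply_nonneg (s.sup (topDualPairing ℝ E).toSeminormFamily) h, C.coe_nonneg]
    have : ‖F h‖ ≤ 0 := h3
    simpa using this
  -- evaluation linear maps
  let ev : E → (WeakDual ℝ E →ₗ[ℝ] ℝ) := fun y =>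
    { toFun := fun h => (h : E →L[ℝ] ℝ) y
      map_add' := fun a b => rfl
      map_smul' := fun c a => rfl }
  have hker : (⨅ i : {y // y ∈ s}, LinearMap.ker (ev i.1)) ≤
      LinearMap.ker (F : WeakDual ℝ E →ₗ[ℝ] ℝ) := by
    intro h hh
    rw [Submodule.mem_iInf] at hh
    rw [LinearMap.mem_ker]
    exact key h fun y hy => hh ⟨y, hy⟩
  have hspan := mem_span_of_iInf_ker_le_ker hker
  obtain ⟨c, hc⟩ := (Submodule.mem_span_range_iff_exists_fun ℝ).1 hspan
  refine ⟨∑ i : {y // y ∈ s}, c i • (i : E), fun h => ?_⟩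
  have := congrArg (fun (G : WeakDual ℝ E →ₗ[ℝ] ℝ) => G h) hc
  simp only [LinearMap.coe_sum, Finset.sum_apply, LinearMap.smul_apply] at this
  rw [show F h = (F : WeakDual ℝ E →ₗ[ℝ] ℝ) h from rfl, ← this]
  rw [map_sum]
  refine Finset.sum_congr rfl fun i _ => ?_
  exact (map_smul (h : E →L[ℝ] ℝ) (c i) (i : E)).symm


lemma scalar_ae {T : Type*} [MeasurableSpace T] (μ : Measure T) [IsFiniteMeasure μ]
    (un : ℕ → T → ℝ) (hun : ∀ n, Integrable (un n) μ)
    (u : T → ℝ) (hu : Integrable u μ)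
    (hconv : ∀ ψ : T → ℝ, Measurable ψ → (∃ C, ∀ t, |ψ t| ≤ C) →
      Tendsto (fun n => ∫ t, ψ t * un n t ∂μ) atTop (𝓝 (∫ t, ψ t * u t ∂μ))) :
    ∀ᵐ t ∂μ, ∀ m : ℕ, ∀ ε : ℝ, 0 < ε → ∃ n, m ≤ n ∧ u t - ε < un n t := by
  have hvn : ∀ n, AEMeasurable (un n) μ := fun n => (hun n).aemeasurable
  have hvu : AEMeasurable u μ := hu.aemeasurable
  set vn : ℕ → T → ℝ := fun n => (hvn n).mk (un n) with hvndef
  set vg : T → ℝ := hvu.mk u with hvgdef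
  have hvnm : ∀ n, Measurable (vn n) := fun n => (hvn n).measurable_mk
  have hvgm : Measurable vg := hvu.measurable_mk
  have hvne : ∀ n, un n =ᵐ[μ] vn n := fun n => (hvn n).ae_eq_mk
  have hvge : u =ᵐ[μ] vg := hvu.ae_eq_mk
  set B : ℕ → ℕ → Set T := fun m j =>
    ⋂ n ∈ {n : ℕ | m ≤ n}, {t | vn n t ≤ vg t - 1/(j+1)} with hBdef
  have hBmeas : ∀ m j, MeasurableSet (B m j) := by
    intro m j
    exact MeasurableSet.biInter (to_countable _) fun n _ =>
      measurableSet_le (hvnm n) (hvgm.sub measurable_const)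
  have hB0 : ∀ m j, μ (B m j) = 0 := by
    intro m j
    by_contra hpos
    set ε : ℝ := 1/(j+1) with hεdef
    have hε : 0 < ε := by positivity
    -- convergence of integrals over B m j
    have htend : Tendsto (fun n => ∫ t in B m j, un n t ∂μ) atTop
        (𝓝 (∫ t in B m j, u t ∂μ)) := by
      have h1 := hconv ((B m j).indicator fun _ => (1:ℝ))
        (measurable_const.indicator (hBmeas m j))
        ⟨1, fun t => by
          by_cases ht : t ∈ B m j <;>
            simp [Set.indicator_of_mem, Set.indicator_of_notMem, ht]⟩
      have hrw : ∀ w : T → ℝ, (∫ t, (B m j).indicator (fun _ => (1:ℝ)) t * w t ∂μ)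
          = ∫ t in B m j, w t ∂μ := by
        intro w
        rw [← integral_indicator (hBmeas m j)]
        congr 1
        funext t
        by_cases ht : t ∈ B m j <;>
          simp [Set.indicator_of_mem, Set.indicator_of_notMem, ht]
      rw [hrw u] at h1
      refine h1.congr fun n => hrw (un n)
    have hle : ∀ n, m ≤ n → (∫ t in B m j, un n t ∂μ)
        ≤ (∫ t in B m j, u t ∂μ) - ε * (μ (B m j)).toReal := by
      intro n hn
      have hae : ∀ᵐ t ∂μ, t ∈ B m j → un n t ≤ u t - ε := by
        filter_upwards [hvne n, hvge] with t h1 h2 ht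
        have := Set.mem_iInter₂.1 ht n hn
        simp only [Set.mem_setOf_eq] at this
        rw [h1, h2]
        exact this
      have h2 : (∫ t in B m j, un n t ∂μ) ≤ ∫ t in B m j, (u t - ε) ∂μ := by
        refine integral_mono_ae ((hun n).restrict) (hu.restrict.sub (integrable_const ε)) ?_
        exact (ae_restrict_iff' (hBmeas m j)).2 hae
      have h3 : (∫ t in B m j, (u t - ε) ∂μ)
          = (∫ t in B m j, u t ∂μ) - ε * (μ (B m j)).toReal := by
        rw [integral_sub hu.restrict (integrable_const ε), setIntegral_const]
        simp [mul_comm, Measure.restrict_apply_univ, Measure.real]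
      rw [h3] at h2
      exact h2
    have hfin := le_of_tendsto htend (eventually_atTop.2 ⟨m, hle⟩)
    have hpos' : 0 < (μ (B m j)).toReal :=
      ENNReal.toReal_pos hpos (measure_ne_top μ _)
    nlinarith
  have h1 : ∀ᵐ t ∂μ, ∀ m j : ℕ, t ∉ B m j :=
    ae_all_iff.2 fun m => ae_all_iff.2 fun j => measure_eq_zero_iff_ae_notMem.1 (hB0 m j)
  have h2 : ∀ᵐ t ∂μ, ∀ n, un n t = vn n t := ae_all_iff.2 hvne
  filter_upwards [h1, h2, hvge] with t ht1 ht2 ht3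
  intro m ε hε
  obtain ⟨j, hj⟩ := exists_nat_one_div_lt hε
  have := ht1 m j
  rw [hBdef] at this
  simp only [Set.mem_iInter, Set.mem_setOf_eq, not_forall] at this
  obtain ⟨n, hn, hlt⟩ := this
  push_neg at hlt
  refine ⟨n, hn, ?_⟩
  rw [ht2 n, ht3]
  have : vg t - ε < vg t - 1/(j+1) := by
    have : (1:ℝ)/(j+1) < ε := hj
    linarith
  linarith

lemma pointwise_mem {E : Type*} [NormedAddCommGroup E] [NormedSpace ℝ E]
    [TopologicalSpace.SeparableSpace E] (v : ℕ → E →L[ℝ] ℝ) (gt : E →L[ℝ] ℝ)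
    {c : ℝ} (hb : ∀ n, ‖v n‖ ≤ c)
    (hP : ∀ x : E, ∀ m : ℕ, ∀ ε : ℝ, 0 < ε → ∃ n, m ≤ n ∧ gt x - ε < v n x) :
    gt ∈ wstarClosure (convexHull ℝ (wstarLs (fun n => {v n}))) := by
  rw [wstarClosure]
  by_contra hc
  set s : Set (WeakDual ℝ E) := convexHull ℝ (wstarLs (fun n => {v n})) with hsdef
  have hconv : Convex ℝ (closure s) := (convex_convexHull ℝ _).closure
  haveI : LocallyConvexSpace ℝ (WeakDual ℝ E) :=
    WeakBilin.locallyConvexSpace (B := topDualPairing ℝ E)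
  obtain ⟨F, u, hFa, hFg⟩ :=
    geometric_hahn_banach_closed_point (E := WeakDual ℝ E)
      hconv isClosed_closure hc
  obtain ⟨x0, hx0⟩ := weakdual_eval F
  -- build a subsequence approaching sup at x0
  have key : ∀ m i : ℕ, ∃ n, m ≤ n ∧ gt x0 - 1/(i+1) < v n x0 := by
    intro m i
    exact hP x0 m (1/(i+1)) (by positivity)
  choose N hN1 hN2 using key
  set σ : ℕ → ℕ := fun i => Nat.rec (N 0 0) (fun i prev => N (prev+1) (i+1)) i with hσdef
  have hσs : StrictMono σ := by
    refine strictMono_nat_of_lt_succ fun i => ?_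
    have : σ (i+1) = N (σ i + 1) (i+1) := rfl
    rw [this]
    exact lt_of_lt_of_le (Nat.lt_succ_self _) (hN1 _ _)
  have hσp : ∀ i, gt x0 - 1/(i+1) < v (σ i) x0 := by
    intro i
    cases i with
    | zero => exact hN2 0 0
    | succ j => exact hN2 _ _
  obtain ⟨ρ, hρ, L, hL⟩ := seq_alaoglu (fun i => v (σ i)) (fun i => hb (σ i))
  have hLs : L ∈ wstarLs (fun n => ({v n} : Set (E →L[ℝ] ℝ))) :=
    ⟨σ ∘ ρ, hσs.comp hρ, fun i => v (σ (ρ i)), fun i => rfl, hL⟩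
  have hsub : s ⊆ @closure (WeakDual ℝ E) _ s := subset_closure
  have hLcl : L ∈ @closure (WeakDual ℝ E) _ s := hsub (subset_convexHull ℝ _ hLs)
  have hlt : F L < u := hFa L hLcl
  rw [hx0 L] at hlt
  rw [hx0 gt] at hFg
  -- L x0 ≥ gt x0
  have hge : gt x0 ≤ L x0 := by
    have h1 : ∀ i : ℕ, gt x0 - 1/(i+1) ≤ L x0 := by
      intro i
      refine ge_of_tendsto (hL x0) (eventually_atTop.2 ⟨i, fun j hj => ?_⟩)
      have h2 : (1:ℝ)/(j+1) ≤ 1/(i+1) := by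
        apply one_div_le_one_div_of_le (by positivity)
        have : (i:ℝ) ≤ j := Nat.cast_le.2 hj
        linarith
      have := hσp (ρ j)
      have h3 : (1:ℝ)/(ρ j + 1) ≤ 1/(j+1) := by
        apply one_div_le_one_div_of_le (by positivity)
        have : (j:ℝ) ≤ ρ j := Nat.cast_le.2 (hρ.le_apply)
        linarith
      linarith
    have h2 : Tendsto (fun i : ℕ => gt x0 - 1/(i+1)) atTop (𝓝 (gt x0 - 0)) := by
      refine Tendsto.const_sub _ ?_
      exact tendsto_one_div_add_atTop_nhds_zero_nat
    rw [sub_zero] at h2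
    exact le_of_tendsto h2 (Eventually.of_forall h1)
  -- contradiction : L x0 < u < gt x0 ≤ L x0
  have : (gt : WeakDual ℝ E) x0 = gt x0 := rfl
  exact absurd (lt_of_lt_of_le (hlt.trans hFg) hge) (lt_irrefl _)

/-- **Castaing–Marcellin lemma for Gelfand integrals.** If an integrably bounded
sequence of Gelfand integrable functions converges to `g` in the
`σ(G¹, L^∞ ⊗ E)`-topology, then a.e. `g t` lies in the weak*-closed convex hull of the
weak* upper limit `w*-Ls {f n t}`. -/
theorem gelfand_limit_mem_wstar_closedConvexHull {T : Type*} [MeasurableSpace T]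
    {E : Type*} [NormedAddCommGroup E] [NormedSpace ℝ E] [CompleteSpace E]
    [TopologicalSpace.SeparableSpace E]
    (μ : Measure T) [IsFiniteMeasure μ] (hcomp : μ.IsComplete)
    (f : ℕ → T → (E →L[ℝ] ℝ)) (hgi : ∀ n, GelfandIntegrable μ (f n))
    (hib : ∃ φ : T → ℝ, Integrable φ μ ∧ ∀ᵐ t ∂μ, ∀ n, ‖f n t‖ ≤ φ t)
    (g : T → (E →L[ℝ] ℝ)) (hg : GelfandIntegrable μ g)
    (hconv : ∀ x : E, ∀ ψ : T → ℝ, Measurable ψ → (∃ C, ∀ t, |ψ t| ≤ C) →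
      Tendsto (fun n => ∫ t, ψ t * f n t x ∂μ) atTop
        (𝓝 (∫ t, ψ t * g t x ∂μ))) :
    ∀ᵐ t ∂μ, g t ∈ wstarClosure (convexHull ℝ (wstarLs (fun n => {f n t}))) := by
  obtain ⟨φ, hφi, hφb⟩ := hib
  have : Nonempty E := ⟨0⟩
  set D := TopologicalSpace.denseSeq E with hD
  have hDd : DenseRange D := TopologicalSpace.denseRange_denseSeq E
  have hscalar : ∀ k : ℕ, ∀ᵐ t ∂μ, ∀ m : ℕ, ∀ ε : ℝ, 0 < ε →
      ∃ n, m ≤ n ∧ g t (D k) - ε < f n t (D k) := by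
    intro k
    exact scalar_ae μ (fun n t => f n t (D k)) (fun n => (hgi n).1 (D k))
      (fun t => g t (D k)) (hg.1 (D k)) (fun ψ hψ hbd => hconv (D k) ψ hψ hbd)
  filter_upwards [ae_all_iff.2 hscalar, hφb] with t ht hbd
  have hφ0 : 0 ≤ φ t := le_trans (norm_nonneg _) (hbd 0)
  set M : ℝ := max (φ t) ‖g t‖ with hM
  have hM0 : 0 ≤ M := le_trans hφ0 (le_max_left _ _)
  have hall : ∀ x : E, ∀ m : ℕ, ∀ ε : ℝ, 0 < ε →
      ∃ n, m ≤ n ∧ g t x - ε < f n t x := by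
    intro x m ε hε
    obtain ⟨k, hk⟩ := hDd.exists_dist_lt x (show (0:ℝ) < ε/(3*(M+1)) by positivity)
    obtain ⟨n, hn, hlt⟩ := ht k m (ε/3) (by positivity)
    refine ⟨n, hn, ?_⟩
    have hdist : ‖x - D k‖ ≤ ε/(3*(M+1)) := by rw [← dist_eq_norm]; exact hk.le
    have e1 : ‖g t x - g t (D k)‖ ≤ ε/3 := by
      rw [← map_sub]
      calc ‖g t (x - D k)‖ ≤ ‖g t‖ * ‖x - D k‖ := (g t).le_opNorm _
        _ ≤ (M+1) * (ε/(3*(M+1))) := by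
            refine mul_le_mul ?_ hdist (norm_nonneg _) (by positivity)
            have : ‖g t‖ ≤ M := le_max_right _ _
            linarith
        _ = ε/3 := by field_simp
    have e2 : ‖f n t x - f n t (D k)‖ ≤ ε/3 := by
      rw [← map_sub]
      calc ‖f n t (x - D k)‖ ≤ ‖f n t‖ * ‖x - D k‖ := (f n t).le_opNorm _
        _ ≤ (M+1) * (ε/(3*(M+1))) := by
            refine mul_le_mul ?_ hdist (norm_nonneg _) (by positivity)
            have h1 : ‖f n t‖ ≤ φ t := hbd n
            have h2 : φ t ≤ M := le_max_left _ _
            linarith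
        _ = ε/3 := by field_simp
    rw [Real.norm_eq_abs] at e1 e2
    have a1 := abs_le.1 e1
    have a2 := abs_le.1 e2
    linarith
  exact pointwise_mem (fun n => f n t) (g t) hbd hall

end
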